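/- The possibility-to-probability reconstruction is the inverse of the probability-to-possibility transformation: given p with values sorted p₁ ≥ p₂ ≥ ... ≥ pₙ and π_r = Σ_j min(p_r, p_j), the recursion q_n = π_n/n, q_r = q_{r+1} + (π_r − π_{r+1})/r recovers q_r = p_r for all r. -/

import Mathlib

open Finset

theorem stmt_7 (n : ℕ) (hn : 0 < n)
    (p : Fin n → ℝ) (hmono : Antitone p) (hpos : ∀ r, 0 ≤ p r)
    (hsum : ∑ r, p r = 1)
    (π : Fin n → ℝ) (hπ : ∀ r, π r = ∑ j, min (p r) (p j))
    (q : Fin n → ℝ)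
    (hqlast : q ⟨n - 1, by omega⟩ = π ⟨n - 1, by omega⟩ / n)
    (hqrec : ∀ r : ℕ, (hr : r + 1 < n) →
      q ⟨r, by omega⟩ = q ⟨r + 1, hr⟩ +
        (π ⟨r, by omega⟩ - π ⟨r + 1, hr⟩) / (r + 1)) :
    ∀ r, q r = p r := by
  have hlast : q ⟨n - 1, by omega⟩ = p ⟨n - 1, by omega⟩ := by
    rw [hqlast, hπ]
    have h1 : ∀ j : Fin n, min (p ⟨n - 1, by omega⟩) (p j) = p ⟨n - 1, by omega⟩ := by
      intro j
      refine min_eq_left (hmono (Fin.le_def.2 ?_))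
      have := j.isLt; simp only [Fin.val_mk] at *; omega
    rw [Finset.sum_congr rfl fun j _ => h1 j, Finset.sum_const, Finset.card_univ,
      Fintype.card_fin, nsmul_eq_mul]
    field_simp
  have hdiff : ∀ r : ℕ, (hr : r + 1 < n) →
      π ⟨r, by omega⟩ - π ⟨r + 1, hr⟩ =
        (r + 1 : ℝ) * (p ⟨r, by omega⟩ - p ⟨r + 1, hr⟩) := by
    intro r hr
    set a : Fin n := ⟨r, by omega⟩
    set b : Fin n := ⟨r + 1, hr⟩
    rw [hπ, hπ, ← Finset.sum_sub_distrib]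
    have key : ∀ j : Fin n, min (p a) (p j) - min (p b) (p j) =
        if j ≤ a then p a - p b else 0 := by
      intro j
      by_cases hj : j ≤ a
      · have hab : a ≤ b := Fin.le_def.2 (by simp [a, b])
        rw [if_pos hj, min_eq_left (hmono hj),
          min_eq_left ((hmono hab).trans (hmono hj))]
      · rw [if_neg hj]
        have hja : a ≤ j := le_of_not_ge hj
        have hjb : b ≤ j := by
          have h2 : (a : ℕ) < j := lt_of_not_ge (fun h => hj (Fin.le_def.2 h))
          exact Fin.le_def.2 h2
        rw [min_eq_right (hmono hja), min_eq_right (hmono hjb)]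
        ring
    rw [Finset.sum_congr rfl fun j _ => key j, ← Finset.sum_filter]
    have hcard : (univ.filter (· ≤ a)).card = r + 1 := by
      have : univ.filter (· ≤ a) = Iic a := by ext j; simp
      rw [this, Fin.card_Iic]
    rw [Finset.sum_const, hcard, nsmul_eq_mul]
    push_cast
    ring
  -- downward induction
  have main : ∀ m : ℕ, ∀ r : ℕ, (h : r < n) → r + m = n - 1 →
      q ⟨r, h⟩ = p ⟨r, h⟩ := by
    intro m
    induction m with
    | zero => intro r h hr; simp only [Nat.add_zero] at hr; subst hr; exact hlast
    | succ k ih =>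
      intro r h hr
      have hr1 : r + 1 < n := by omega
      rw [hqrec r hr1, hdiff r hr1, ih (r + 1) hr1 (by omega)]
      have : ((r : ℝ) + 1) ≠ 0 := by positivity
      field_simp
      ring
  intro r
  obtain ⟨r, hr⟩ := r
  exact main (n - 1 - r) r hr (by omega)
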